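/- Let S = {z \in \C : |Re z| < \pi/2} and for \lambda \ge 0 define g_\lambda on S by g_\lambda(x+iy) = 1/2 - (1/\pi) arctan(sinh(\lambda+2-y)/cos x). Then g_\lambda is harmonic on S, satisfies 0 < g_\lambda < 1, and for any fixed x with |x| < \pi/2 and y < \lambda + 2, g_\lambda(x+iy) = (1/\pi) arctan(cos x / sinh(\lambda + 2 - y)). -/

import Mathlib

open Real Set Complex

/-- `u` is harmonic on `s ⊆ ℂ`: it is `C²` there and its Laplacian vanishes. -/
def HarmonicOnSet (u : ℂ → ℝ) (s : Set ℂ) : Prop :=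
  ContDiffOn ℝ 2 u s ∧ ∀ z ∈ s,
    iteratedFDeriv ℝ 2 u z ![1, 1] + iteratedFDeriv ℝ 2 u z ![Complex.I, Complex.I] = 0


noncomputable section

private def uu (c : ℝ) (w : ℂ) : ℝ :=
  1 / 2 - (1 / π) * Real.arctan (Real.sinh (c - w.im) / Real.cos w.re)

private def DD (c : ℝ) (w : ℂ) : ℝ := Real.cos w.re ^ 2 + Real.sinh (c - w.im) ^ 2

private def pp (c : ℝ) (w : ℂ) : ℝ :=
  -(1 / π) * (Real.sin w.re * Real.sinh (c - w.im) / DD c w)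

private def qq (c : ℝ) (w : ℂ) : ℝ :=
  (1 / π) * (Real.cos w.re * Real.cosh (c - w.im) / DD c w)

private def PP (c : ℝ) (w : ℂ) : ℂ →L[ℝ] ℝ := pp c w • Complex.reCLM + qq c w • Complex.imCLM

private lemma hDD_pos (c : ℝ) {z : ℂ} (hC : 0 < Real.cos z.re) : 0 < DD c z :=
  add_pos_of_pos_of_nonneg (pow_pos hC 2) (sq_nonneg _)

private lemma hasFDerivAt_cos' (z : ℂ) :
    HasFDerivAt (fun w : ℂ => Real.cos w.re) ((-Real.sin z.re) • Complex.reCLM) z := by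
  refine ((Real.hasDerivAt_cos z.re).comp_hasFDerivAt z Complex.reCLM.hasFDerivAt).congr_fderiv ?_
  refine ContinuousLinearMap.ext fun w => ?_
  simp

private lemma hasFDerivAt_sin' (z : ℂ) :
    HasFDerivAt (fun w : ℂ => Real.sin w.re) ((Real.cos z.re) • Complex.reCLM) z := by
  exact (Real.hasDerivAt_sin z.re).comp_hasFDerivAt z Complex.reCLM.hasFDerivAt

private lemma hasFDerivAt_sinh' (c : ℝ) (z : ℂ) :
    HasFDerivAt (fun w : ℂ => Real.sinh (c - w.im)) ((-Real.cosh (c - z.im)) • Complex.imCLM)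
      z := by
  have hin : HasFDerivAt (fun w : ℂ => c - w.im) (-Complex.imCLM) z := by
    refine ((hasFDerivAt_const c z).sub Complex.imCLM.hasFDerivAt).congr_fderiv ?_
    simp
  have := (Real.hasDerivAt_sinh (c - z.im)).comp_hasFDerivAt z hin
  refine this.congr_fderiv ?_
  ext w
  simp [mul_comm]

private lemma hasFDerivAt_cosh' (c : ℝ) (z : ℂ) :
    HasFDerivAt (fun w : ℂ => Real.cosh (c - w.im)) ((-Real.sinh (c - z.im)) • Complex.imCLM)
      z := by
  have hin : HasFDerivAt (fun w : ℂ => c - w.im) (-Complex.imCLM) z := by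
    refine ((hasFDerivAt_const c z).sub Complex.imCLM.hasFDerivAt).congr_fderiv ?_
    simp
  have := (Real.hasDerivAt_cosh (c - z.im)).comp_hasFDerivAt z hin
  refine this.congr_fderiv ?_
  ext w
  simp [mul_comm]

private lemma hasFDerivAt_uu (c : ℝ) {z : ℂ} (hC : 0 < Real.cos z.re) :
    HasFDerivAt (uu c) (PP c z) z := by
  have hDne : DD c z ≠ 0 := (hDD_pos c hC).ne'
  have hinv : HasFDerivAt (fun w : ℂ => (Real.cos w.re)⁻¹)
      ((-(Real.cos z.re ^ 2)⁻¹) • ((-Real.sin z.re) • Complex.reCLM)) z :=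
    (hasDerivAt_inv hC.ne').comp_hasFDerivAt z (hasFDerivAt_cos' z)
  have hg := (hasFDerivAt_sinh' c z).mul hinv
  have harc := (Real.hasDerivAt_arctan
      (Real.sinh (c - z.im) * (Real.cos z.re)⁻¹)).comp_hasFDerivAt z hg
  have hfin := (hasFDerivAt_const ((1:ℝ)/2) z).sub (harc.const_mul (1/π))
  have hkey : (1:ℝ) + (Real.sinh (c - z.im) * (Real.cos z.re)⁻¹) ^ 2 ≠ 0 := by positivity
  unfold uu
  simp only [div_eq_mul_inv]
  refine hfin.congr_fderiv ?_
  refine ContinuousLinearMap.ext fun w => ?_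
  simp [PP, pp, qq, DD, div_eq_mul_inv, smul_smul]
  field_simp
  ring

private lemma hasFDerivAt_DD (c : ℝ) (z : ℂ) :
    HasFDerivAt (DD c)
      ((-(2 * Real.cos z.re * Real.sin z.re)) • Complex.reCLM +
        (-(2 * Real.sinh (c - z.im) * Real.cosh (c - z.im))) • Complex.imCLM) z := by
  have h1 := ((hasFDerivAt_cos' z).mul (hasFDerivAt_cos' z)).add
    ((hasFDerivAt_sinh' c z).mul (hasFDerivAt_sinh' c z))
  unfold DD
  simp only [pow_two]
  refine h1.congr_fderiv ?_
  refine ContinuousLinearMap.ext fun w => ?_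
  simp
  ring

private lemma hasFDerivAt_pp (c : ℝ) {z : ℂ} (hC : 0 < Real.cos z.re) :
    HasFDerivAt (pp c)
      ((-(1 / π) * (Real.cos z.re * Real.sinh (c - z.im) *
          (DD c z + 2 * Real.sin z.re ^ 2) / DD c z ^ 2)) • Complex.reCLM +
        ((1 / π) * (Real.sin z.re * Real.cosh (c - z.im) *
          (DD c z - 2 * Real.sinh (c - z.im) ^ 2) / DD c z ^ 2)) • Complex.imCLM) z := by
  have hDne : DD c z ≠ 0 := (hDD_pos c hC).ne'
  have hDinv := (hasDerivAt_inv hDne).comp_hasFDerivAt z (hasFDerivAt_DD c z)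
  have hN := (hasFDerivAt_sin' z).mul (hasFDerivAt_sinh' c z)
  have h0 := (hN.mul hDinv).const_mul (-(1 / π) : ℝ)
  unfold pp
  simp only [div_eq_mul_inv]
  refine h0.congr_fderiv ?_
  refine ContinuousLinearMap.ext fun w => ?_
  simp [DD]
  field_simp
  ring

private lemma hasFDerivAt_qq (c : ℝ) {z : ℂ} (hC : 0 < Real.cos z.re) :
    HasFDerivAt (qq c)
      (((1 / π) * (Real.sin z.re * Real.cosh (c - z.im) *
          (2 * Real.cos z.re ^ 2 - DD c z) / DD c z ^ 2)) • Complex.reCLM +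
        ((1 / π) * (Real.cos z.re * Real.sinh (c - z.im) *
          (2 * Real.cosh (c - z.im) ^ 2 - DD c z) / DD c z ^ 2)) • Complex.imCLM) z := by
  have hDne : DD c z ≠ 0 := (hDD_pos c hC).ne'
  have hDinv := (hasDerivAt_inv hDne).comp_hasFDerivAt z (hasFDerivAt_DD c z)
  have hN := (hasFDerivAt_cos' z).mul (hasFDerivAt_cosh' c z)
  have h0 := (hN.mul hDinv).const_mul ((1 / π) : ℝ)
  unfold qq
  simp only [div_eq_mul_inv]
  refine h0.congr_fderiv ?_
  refine ContinuousLinearMap.ext fun w => ?_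
  simp [DD]
  field_simp
  ring

private lemma hcos_strip : ∀ w : ℂ, |w.re| < π / 2 → 0 < Real.cos w.re := fun w hw =>
  Real.cos_pos_of_mem_Ioo ⟨(abs_lt.1 hw).1, (abs_lt.1 hw).2⟩

private lemma laplacian_uu (c : ℝ) {z : ℂ} (hz : |z.re| < π / 2) :
    iteratedFDeriv ℝ 2 (uu c) z ![1, 1] +
      iteratedFDeriv ℝ 2 (uu c) z ![Complex.I, Complex.I] = 0 := by
  have hsOpen : IsOpen {w : ℂ | |w.re| < π / 2} :=
    isOpen_lt (continuous_abs.comp Complex.continuous_re) continuous_const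
  have hC := hcos_strip z hz
  have hD := hDD_pos c hC
  have hev : fderiv ℝ (uu c) =ᶠ[nhds z] PP c := by
    filter_upwards [hsOpen.mem_nhds hz] with w hw
    exact (hasFDerivAt_uu c (hcos_strip w hw)).fderiv
  have hP : HasFDerivAt (PP c) _ z :=
    ((hasFDerivAt_pp c hC).smul_const Complex.reCLM).add
      ((hasFDerivAt_qq c hC).smul_const Complex.imCLM)
  rw [iteratedFDeriv_two_apply, iteratedFDeriv_two_apply, hev.fderiv_eq, hP.fderiv]
  simp [DD]
  rw [Real.cosh_sq, Real.sin_sq]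
  field_simp
  ring

private lemma contDiffOn_uu (c : ℝ) :
    ContDiffOn ℝ 2 (uu c) {w : ℂ | |w.re| < π / 2} := by
  unfold uu
  have h1 : ContDiffOn ℝ 2 (fun w : ℂ => Real.sinh (c - w.im) / Real.cos w.re)
      {w : ℂ | |w.re| < π / 2} := by
    apply ContDiffOn.div
    · exact (Real.contDiff_sinh.comp (contDiff_const.sub Complex.imCLM.contDiff)).contDiffOn
    · exact (Real.contDiff_cos.comp Complex.reCLM.contDiff).contDiffOn
    · exact fun w hw => (hcos_strip w hw).ne'
  exact contDiffOn_const.sub (contDiffOn_const.mul (Real.contDiff_arctan.comp_contDiffOn h1))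

end
/-- On the strip `S = {|Re z| < π/2}`, the function
`g_λ(x+iy) = 1/2 - (1/π) arctan(sinh(λ+2-y)/cos x)` is harmonic, takes values in `(0,1)`,
and for `y < λ + 2` equals `(1/π) arctan(cos x / sinh(λ+2-y))`. -/
theorem strip_harmonic_function (lam : ℝ) (hlam : 0 ≤ lam) :
    HarmonicOnSet
        (fun z => 1 / 2 - (1 / π) * Real.arctan (Real.sinh (lam + 2 - z.im) / Real.cos z.re))
        {z : ℂ | |z.re| < π / 2} ∧
      (∀ z : ℂ, |z.re| < π / 2 →
        0 < 1 / 2 - (1 / π) * Real.arctan (Real.sinh (lam + 2 - z.im) / Real.cos z.re) ∧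
        1 / 2 - (1 / π) * Real.arctan (Real.sinh (lam + 2 - z.im) / Real.cos z.re) < 1) ∧
      ∀ x y : ℝ, |x| < π / 2 → y < lam + 2 →
        1 / 2 - (1 / π) * Real.arctan (Real.sinh (lam + 2 - y) / Real.cos x) =
          (1 / π) * Real.arctan (Real.cos x / Real.sinh (lam + 2 - y)) := by
  refine ⟨⟨contDiffOn_uu (lam + 2), fun z hz => laplacian_uu (lam + 2) hz⟩, ?_, ?_⟩
  · intro z hz
    have h1 := Real.arctan_lt_pi_div_two (Real.sinh (lam + 2 - z.im) / Real.cos z.re)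
    have h2 := Real.neg_pi_div_two_lt_arctan (Real.sinh (lam + 2 - z.im) / Real.cos z.re)
    have hπ : (0:ℝ) < 1 / π := by positivity
    have key : (1 / π) * (π / 2) = 1 / 2 := by field_simp
    have key2 : (1 / π) * (-(π / 2)) = -(1 / 2) := by field_simp
    constructor
    · have := mul_lt_mul_of_pos_left h1 hπ
      linarith
    · have := mul_lt_mul_of_pos_left h2 hπ
      linarith
  · intro x y hx hy
    have hc : 0 < Real.cos x := Real.cos_pos_of_mem_Ioo ⟨(abs_lt.1 hx).1, (abs_lt.1 hx).2⟩
    have hs : 0 < Real.sinh (lam + 2 - y) := Real.sinh_pos_iff.2 (by linarith)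
    have h : Real.cos x / Real.sinh (lam + 2 - y) =
        (Real.sinh (lam + 2 - y) / Real.cos x)⁻¹ := (inv_div _ _).symm
    rw [h, Real.arctan_inv_of_pos (div_pos hs hc)]
    rw [mul_sub]
    have key : (1 / π) * (π / 2) = 1 / 2 := by field_simp
    rw [key]
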